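/- Let d, n ≥ 1, let Σ be a d×d real symmetric positive definite matrix, let R ∈ SO(d), and set R_Σ = Σ^{1/2} R Σ^{-1/2}. Let P_Σ denote the n-fold product of the centered multivariate Gaussian measure on ℝ^d with covariance Σ, let W(y₁,…,y_n) = Σᵢ yᵢ yᵢᵀ, and let π(X) = (det X)^{-1/d} X be the projection normalizing the determinant. Then the pushforward of P_Σ under y ↦ π(R_Σ · W(y) · R_Σᵀ) equals the pushforward of P_Σ under y ↦ π(W(y)); i.e., the projective Wishart distribution PW(Σ, n) is invariant under the action of H_Σ. -/

import Mathlib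

open Matrix MeasureTheory
open scoped ENNReal

/-- Matrices inherit the product measurable structure of `Fin d → Fin d → ℝ`. -/
instance {d : ℕ} : MeasurableSpace (Matrix (Fin d) (Fin d) ℝ) :=
  inferInstanceAs (MeasurableSpace (Fin d → Fin d → ℝ))

/-- The density of the centered multivariate Gaussian distribution with covariance `S`
with respect to Lebesgue measure on `ℝ^d`. -/
noncomputable def gaussianDensity {d : ℕ} (S : Matrix (Fin d) (Fin d) ℝ) (v : Fin d → ℝ) : ℝ :=
  (2 * Real.pi) ^ (-(d : ℝ) / 2) * S.det ^ (-(1 : ℝ) / 2) *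
    Real.exp (-(1 / 2) * (v ⬝ᵥ S⁻¹ *ᵥ v))

/-- The centered multivariate Gaussian measure on `ℝ^d` with covariance matrix `S`. -/
noncomputable def gaussianMeasure {d : ℕ} (S : Matrix (Fin d) (Fin d) ℝ) :
    Measure (Fin d → ℝ) :=
  volume.withDensity fun v => ENNReal.ofReal (gaussianDensity S v)

/-- The sum of outer products `Σᵢ yᵢ yᵢᵀ` of a family of `n` vectors of `ℝ^d`. -/
noncomputable def wishartSample {d n : ℕ} (y : Fin n → Fin d → ℝ) :
    Matrix (Fin d) (Fin d) ℝ :=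
  ∑ i, Matrix.vecMulVec (y i) (y i)

open scoped Classical in
/-- The positive semidefinite square root of a matrix, extended to a total function
(junk value `0` when the matrix is not positive semidefinite). -/
noncomputable def matSqrt {d : ℕ} (A : Matrix (Fin d) (Fin d) ℝ) : Matrix (Fin d) (Fin d) ℝ :=
  if hA : A.PosSemidef then
    (hA.1.eigenvectorUnitary : Matrix (Fin d) (Fin d) ℝ) * diagonal (Real.sqrt ∘ hA.1.eigenvalues) *
      (star hA.1.eigenvectorUnitary : Matrix (Fin d) (Fin d) ℝ)
  else 0

open scoped Classical in
/-- The determinant-normalizing projection `π(X) = (det X)^{-1/d} • X`, with the convention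
`π(X) = X` when `det X ≤ 0`. -/
noncomputable def projDet {d : ℕ} (X : Matrix (Fin d) (Fin d) ℝ) : Matrix (Fin d) (Fin d) ℝ :=
  if 0 < X.det then (X.det ^ (-(1 : ℝ) / d)) • X else X

namespace ProjWishartAux

variable {d n : ℕ}

lemma measurable_det' : Measurable fun M : Matrix (Fin d) (Fin d) ℝ => M.det := by
  simp_rw [Matrix.det_apply']
  exact Finset.measurable_sum _ fun σ _ =>
    ((Finset.measurable_prod _ fun i _ =>
      (measurable_pi_apply i).comp (measurable_pi_apply (σ i)))).const_mul _

lemma measurable_mulVec (A : Matrix (Fin d) (Fin d) ℝ) :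
    Measurable fun v : Fin d → ℝ => A *ᵥ v := by
  refine measurable_pi_iff.mpr fun i => ?_
  simp_rw [Matrix.mulVec, dotProduct]
  exact Finset.measurable_sum _ fun j _ => (measurable_pi_apply j).const_mul _

lemma measurable_wishart : Measurable (wishartSample (d := d) (n := n)) := by
  refine measurable_pi_iff.mpr fun a => measurable_pi_iff.mpr fun b => ?_
  have : (fun y : Fin n → Fin d → ℝ => wishartSample y a b)
      = fun y => ∑ i, y i a * y i b := by
    funext y
    simp [wishartSample, Matrix.vecMulVec_apply, Matrix.sum_apply]
  rw [this]
  exact Finset.measurable_sum _ fun i _ =>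
    (((measurable_pi_apply a).comp (measurable_pi_apply i)).mul
      ((measurable_pi_apply b).comp (measurable_pi_apply i)) :
      Measurable ((fun y : Fin n → Fin d → ℝ => y i a) * fun y => y i b))

open scoped Classical in
lemma measurable_projDet : Measurable (projDet (d := d)) := by
  unfold projDet
  have hdet : Measurable fun X : Matrix (Fin d) (Fin d) ℝ => X.det := measurable_det'
  refine Measurable.ite (measurableSet_lt measurable_const hdet) ?_ measurable_id
  refine measurable_pi_iff.mpr fun a => measurable_pi_iff.mpr fun b => ?_
  have : (fun X : Matrix (Fin d) (Fin d) ℝ => ((X.det ^ (-(1 : ℝ) / d)) • X) a b)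
      = fun X => X.det ^ (-(1 : ℝ) / d) * X a b := by
    funext X; simp [Matrix.smul_apply]
  rw [this]
  exact (hdet.pow measurable_const).mul
    ((measurable_pi_apply b).comp (measurable_pi_apply a))

lemma quad_conj (A M : Matrix (Fin d) (Fin d) ℝ) (v : Fin d → ℝ) :
    (A *ᵥ v) ⬝ᵥ M *ᵥ (A *ᵥ v) = v ⬝ᵥ (Aᵀ * M * A) *ᵥ v := by
  rw [← Matrix.mulVec_mulVec, ← Matrix.mulVec_mulVec,
    Matrix.dotProduct_mulVec v, Matrix.vecMul_transpose]

lemma measurable_gaussianDensity (S : Matrix (Fin d) (Fin d) ℝ) :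
    Measurable fun v : Fin d → ℝ => ENNReal.ofReal (gaussianDensity S v) := by
  have hquad : Measurable fun v : Fin d → ℝ => v ⬝ᵥ S⁻¹ *ᵥ v := by
    simp_rw [dotProduct]
    exact Finset.measurable_sum _ fun i _ =>
      (measurable_pi_apply i).mul ((measurable_pi_apply i).comp (measurable_mulVec S⁻¹))
  exact ENNReal.measurable_ofReal.comp
    ((Real.measurable_exp.comp (hquad.const_mul _)).const_mul _)

lemma map_withDensity_comp {α β : Type*} [MeasurableSpace α] [MeasurableSpace β]
    (μ : Measure α) {T : α → β} (hT : Measurable T) {g : β → ℝ≥0∞} (hg : Measurable g) :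
    Measure.map T (μ.withDensity fun x => g (T x)) = (Measure.map T μ).withDensity g := by
  ext s hs
  rw [Measure.map_apply hT hs, withDensity_apply _ hs, withDensity_apply _ (hT hs),
    setLIntegral_map hs hg hT]

lemma measurePreserving_mulVec_gaussian (A S : Matrix (Fin d) (Fin d) ℝ)
    (hdet : A.det = 1) (hq : Aᵀ * S⁻¹ * A = S⁻¹) :
    MeasurePreserving (fun v => A *ᵥ v) (gaussianMeasure S) (gaussianMeasure S) := by
  have hT := measurable_mulVec A
  refine ⟨hT, ?_⟩
  have hinv : ∀ v, gaussianDensity S (A *ᵥ v) = gaussianDensity S v := by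
    intro v
    unfold gaussianDensity
    rw [quad_conj, hq]
  have hvol : Measure.map (fun v : Fin d → ℝ => A *ᵥ v) volume = volume := by
    have h1 : Measure.map (Matrix.toLin' A) volume
        = ENNReal.ofReal |A.det⁻¹| • volume :=
      Real.map_matrix_volume_pi_eq_smul_volume_pi (by rw [hdet]; exact one_ne_zero)
    have h2 : ⇑(Matrix.toLin' A) = fun v : Fin d → ℝ => A *ᵥ v := by
      funext v; exact Matrix.toLin'_apply A v
    rw [← h2, h1, hdet]
    simp
  have hdens : (fun v => ENNReal.ofReal (gaussianDensity S v))
      = fun v => ENNReal.ofReal (gaussianDensity S (A *ᵥ v)) := by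
    funext v; rw [hinv]
  calc Measure.map (fun v => A *ᵥ v) (gaussianMeasure S)
      = Measure.map (fun v => A *ᵥ v)
          (volume.withDensity fun v => ENNReal.ofReal (gaussianDensity S (A *ᵥ v))) := by
        rw [gaussianMeasure, hdens]
    _ = (Measure.map (fun v => A *ᵥ v) volume).withDensity
          (fun v => ENNReal.ofReal (gaussianDensity S v)) :=
        map_withDensity_comp (T := fun v => A *ᵥ v)
          (g := fun v => ENNReal.ofReal (gaussianDensity S v)) volume hT
          (measurable_gaussianDensity S)
    _ = gaussianMeasure S := by rw [hvol, gaussianMeasure]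

lemma conj_wishart (A : Matrix (Fin d) (Fin d) ℝ) (y : Fin n → Fin d → ℝ) :
    A * wishartSample y * Aᵀ = wishartSample fun i => A *ᵥ y i := by
  have key : ∀ u : Fin d → ℝ, A * Matrix.vecMulVec u u * Aᵀ
      = Matrix.vecMulVec (A *ᵥ u) (A *ᵥ u) := by
    intro u
    rw [Matrix.vecMulVec_eq (Fin 1), Matrix.vecMulVec_eq (Fin 1), Matrix.replicateCol_mulVec,
      ← Matrix.vecMul_transpose, Matrix.replicateRow_vecMul]
    simp [Matrix.mul_assoc]
  unfold wishartSample
  rw [Finset.mul_sum, Finset.sum_mul]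
  exact Finset.sum_congr rfl fun i _ => key (y i)

end ProjWishartAux

/-- the projective Wishart distribution `PW(Σ, n)`, i.e. the law of
`π(Σᵢ YᵢYᵢᵀ)`, is invariant under the action `x ↦ R_Σ x R_Σᵀ` of `H_Σ`,
where `R_Σ = Σ^{1/2} R Σ^{-1/2}` and `R ∈ SO(d)`. -/
theorem projective_wishart_invariant_H_sigma (d n : ℕ) (hd : 1 ≤ d) (hn : 1 ≤ n)
    (S R : Matrix (Fin d) (Fin d) ℝ) (hS : S.PosDef)
    (hR : R * Rᵀ = 1) (hdetR : R.det = 1) :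
    Measure.map
        (fun y : Fin n → Fin d → ℝ =>
          projDet ((matSqrt S * R * (matSqrt S)⁻¹) * wishartSample y
            * (matSqrt S * R * (matSqrt S)⁻¹)ᵀ))
        (Measure.pi fun _ : Fin n => gaussianMeasure S)
      = Measure.map (fun y : Fin n → Fin d → ℝ => projDet (wishartSample y))
        (Measure.pi fun _ : Fin n => gaussianMeasure S) := by
  classical
  open ProjWishartAux in
  -- properties of the square root `Q := matSqrt S`
  have hPS : S.PosSemidef := hS.posSemidef
  set Q : Matrix (Fin d) (Fin d) ℝ := matSqrt S with hQ
  have hQdef : Q = (hPS.1.eigenvectorUnitary : Matrix (Fin d) (Fin d) ℝ) *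
      diagonal (Real.sqrt ∘ hPS.1.eigenvalues) *
      (star hPS.1.eigenvectorUnitary : Matrix (Fin d) (Fin d) ℝ) := dif_pos hPS
  have hQQ : Q * Q = S := by
    rw [hQdef]
    conv_rhs => rw [hPS.1.spectral_theorem, Unitary.conjStarAlgAut_apply]
    have hD : diagonal (Real.sqrt ∘ hPS.1.eigenvalues) * diagonal (Real.sqrt ∘ hPS.1.eigenvalues)
        = diagonal (RCLike.ofReal ∘ hPS.1.eigenvalues) := by
      rw [diagonal_mul_diagonal]; congr 1; funext i
      simp [Real.mul_self_sqrt (hPS.eigenvalues_nonneg i)]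
    calc _ = (hPS.1.eigenvectorUnitary : Matrix (Fin d) (Fin d) ℝ) *
          (diagonal (Real.sqrt ∘ hPS.1.eigenvalues) *
            ((star hPS.1.eigenvectorUnitary : Matrix (Fin d) (Fin d) ℝ) *
              (hPS.1.eigenvectorUnitary : Matrix (Fin d) (Fin d) ℝ)) *
          diagonal (Real.sqrt ∘ hPS.1.eigenvalues)) *
          (star hPS.1.eigenvectorUnitary : Matrix (Fin d) (Fin d) ℝ) := by
          simp only [Matrix.mul_assoc]
      _ = _ := by
          simp only [Unitary.coe_star, Unitary.coe_star_mul_self, Matrix.mul_one]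
          rw [hD]
  have hQsym : Qᵀ = Q := by
    rw [hQdef, ← Matrix.conjTranspose_eq_transpose_of_trivial]
    simp [Matrix.conjTranspose_mul, Matrix.mul_assoc, Matrix.star_eq_conjTranspose]
  have hdetQ : Q.det ≠ 0 := by
    intro h
    have h2 : Q.det * Q.det = S.det := by rw [← Matrix.det_mul, hQQ]
    rw [h, mul_zero] at h2
    exact absurd h2.symm (ne_of_gt hS.det_pos)
  have hdetQu : IsUnit Q.det := isUnit_iff_ne_zero.mpr hdetQ
  set A : Matrix (Fin d) (Fin d) ℝ := Q * R * Q⁻¹ with hA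
  -- det A = 1
  have hAdet : A.det = 1 := by
    have h3 : A.det * Q.det = Q.det * R.det := by
      rw [← Matrix.det_mul, hA, Matrix.nonsing_inv_mul_cancel_right _ _ hdetQu,
        Matrix.det_mul]
    rw [hdetR, mul_one] at h3
    exact mul_right_cancel₀ hdetQ (by rw [h3, one_mul])
  -- Aᵀ S⁻¹ A = S⁻¹
  have hRtR : Rᵀ * R = 1 := mul_eq_one_comm.mp hR
  have hAT : Aᵀ = Q⁻¹ * Rᵀ * Q := by
    rw [hA, Matrix.transpose_mul, Matrix.transpose_mul, Matrix.transpose_nonsing_inv, hQsym,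
      Matrix.mul_assoc]
  have hSinv : S⁻¹ = Q⁻¹ * Q⁻¹ := by rw [← hQQ, Matrix.mul_inv_rev]
  have hAq : Aᵀ * S⁻¹ * A = S⁻¹ := by
    rw [hAT, hSinv, hA]
    calc Q⁻¹ * Rᵀ * Q * (Q⁻¹ * Q⁻¹) * (Q * R * Q⁻¹)
        = Q⁻¹ * (Rᵀ * (Q * (Q⁻¹ * (Q⁻¹ * (Q * (R * Q⁻¹)))))) := by
          simp only [Matrix.mul_assoc]
      _ = Q⁻¹ * (Rᵀ * (R * Q⁻¹)) := by
          rw [Matrix.mul_nonsing_inv_cancel_left _ _ hdetQu,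
            Matrix.nonsing_inv_mul_cancel_left _ _ hdetQu]
      _ = Q⁻¹ * Q⁻¹ := by
          rw [← Matrix.mul_assoc Rᵀ R, hRtR, Matrix.one_mul]
  -- the Gaussian measure is preserved by `A *ᵥ ·`
  have hmp : MeasurePreserving (fun v => A *ᵥ v) (gaussianMeasure S) (gaussianMeasure S) :=
    measurePreserving_mulVec_gaussian A S hAdet hAq
  haveI : SigmaFinite (gaussianMeasure S) := by
    rw [gaussianMeasure]; infer_instance
  have hpi : MeasurePreserving (fun y : Fin n → Fin d → ℝ => fun i => A *ᵥ y i)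
      (Measure.pi fun _ : Fin n => gaussianMeasure S)
      (Measure.pi fun _ : Fin n => gaussianMeasure S) :=
    measurePreserving_pi _ _ (fun _ => hmp)
  have hF : Measurable fun X : Matrix (Fin d) (Fin d) ℝ => projDet X :=
    ProjWishartAux.measurable_projDet
  have hW : Measurable (wishartSample (d := d) (n := n)) := ProjWishartAux.measurable_wishart
  have hfun : (fun y : Fin n → Fin d → ℝ =>
      projDet (A * wishartSample y * Aᵀ))
      = (fun y : Fin n → Fin d → ℝ => projDet (wishartSample y)) ∘
        (fun y : Fin n → Fin d → ℝ => fun i => A *ᵥ y i) := by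
    funext y
    simp only [Function.comp]
    rw [ProjWishartAux.conj_wishart]
  calc Measure.map
        (fun y : Fin n → Fin d → ℝ => projDet (A * wishartSample y * Aᵀ))
        (Measure.pi fun _ : Fin n => gaussianMeasure S)
      = Measure.map ((fun y : Fin n → Fin d → ℝ => projDet (wishartSample y)) ∘
          (fun y : Fin n → Fin d → ℝ => fun i => A *ᵥ y i))
          (Measure.pi fun _ : Fin n => gaussianMeasure S) := by rw [hfun]
    _ = Measure.map (fun y : Fin n → Fin d → ℝ => projDet (wishartSample y))
          (Measure.map (fun y : Fin n → Fin d → ℝ => fun i => A *ᵥ y i)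
            (Measure.pi fun _ : Fin n => gaussianMeasure S)) :=
        (Measure.map_map (hF.comp hW) hpi.measurable).symm
    _ = Measure.map (fun y : Fin n → Fin d → ℝ => projDet (wishartSample y))
          (Measure.pi fun _ : Fin n => gaussianMeasure S) := by rw [hpi.map_eq]
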